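/- arXiv:0810.4502 — 2 statements merged into one kernel-verified Lean document; each statement's English description precedes it below -/
import Mathlib

section
/- Suppose C = ⟨E⟩_C. Let F, G : C → Ab be reduced polynomial functors of degree ≤ n and φ : F → G a natural transformation. Then the following are equivalent: (1) φ is a natural isomorphism; (2) φ_{E^{∨k}} is an isomorphism for all k ≤ n; (3) φ_{E^{∨n}} is an isomorphism; (4) cr_k(φ)_{(E,…,E)} is an isomorphism for all 1 ≤ k ≤ n. -/
open CategoryTheory Limits ZeroObject
open scoped TensorProduct

set_option linter.unusedSectionVars false

universe w v u

namespace QF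

variable {C : Type u} [Category.{v} C] [HasZeroObject C] [HasZeroMorphisms C]
  [HasBinaryCoproducts C]

noncomputable section

/-- The first canonical retraction `r₁ : X ∨ Y ⟶ X` (identity on `X`, zero on `Y`). -/
def r1 (X Y : C) : (X ⨿ Y) ⟶ X := coprod.desc (𝟙 X) 0

/-- The second canonical retraction `r₂ : X ∨ Y ⟶ Y` (zero on `X`, identity on `Y`). -/
def r2 (X Y : C) : (X ⨿ Y) ⟶ Y := coprod.desc 0 (𝟙 Y)

/-- The fold (codiagonal) map `∇² : X ∨ X ⟶ X`. -/
def fold (X : C) : (X ⨿ X) ⟶ X := coprod.desc (𝟙 X) (𝟙 X)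

/-- A functor `F : C ⥤ Ab` is *reduced* if `F(0) = 0`. -/
def Reduced (F : C ⥤ AddCommGrpCat.{w}) : Prop := Subsingleton (F.obj (0 : C))

/-- The second cross-effect `cr₂F(X,Y) = ker((F(r₁),F(r₂)) : F(X∨Y) → F(X) × F(Y))`,
as a subgroup of `F(X ∨ Y)`. -/
def cr2sub (F : C ⥤ AddCommGrpCat.{w}) (X Y : C) : AddSubgroup (F.obj (X ⨿ Y)) :=
  AddMonoidHom.ker (show (F.obj (X ⨿ Y) : Type w) →+ F.obj X from AddCommGrpCat.Hom.hom <| F.map (r1 X Y)) ⊓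
  AddMonoidHom.ker (show (F.obj (X ⨿ Y) : Type w) →+ F.obj Y from AddCommGrpCat.Hom.hom <| F.map (r2 X Y))

lemma mem_cr2sub {F : C ⥤ AddCommGrpCat.{w}} {X Y : C} {z : F.obj (X ⨿ Y)} :
    z ∈ cr2sub F X Y ↔ F.map (r1 X Y) z = 0 ∧ F.map (r2 X Y) z = 0 := Iff.rfl

lemma fmap_comp_apply (F : C ⥤ AddCommGrpCat.{w}) {X Y Z : C} (f : X ⟶ Y) (g : Y ⟶ Z)
    (x : F.obj X) : F.map (f ≫ g) x = F.map g (F.map f x) := by rw [F.map_comp]; rfl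

lemma map_comp_r1 {X X' : C} (f : X ⟶ X') (Y : C) :
    coprod.map f (𝟙 Y) ≫ r1 X' Y = r1 X Y ≫ f := by
  apply coprod.hom_ext <;> simp [r1]

lemma map_comp_r2 {X X' : C} (f : X ⟶ X') (Y : C) :
    coprod.map f (𝟙 Y) ≫ r2 X' Y = r2 X Y := by
  apply coprod.hom_ext <;> simp [r2]

lemma map_comp_r1' (X : C) {Y Y' : C} (f : Y ⟶ Y') :
    coprod.map (𝟙 X) f ≫ r1 X Y' = r1 X Y := by
  apply coprod.hom_ext <;> simp [r1]

lemma map_comp_r2' (X : C) {Y Y' : C} (f : Y ⟶ Y') :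
    coprod.map (𝟙 X) f ≫ r2 X Y' = r2 X Y ≫ f := by
  apply coprod.hom_ext <;> simp [r2]

lemma cr2sub_map {F : C ⥤ AddCommGrpCat.{w}} {X X' Y : C} (f : X ⟶ X') {z : F.obj (X ⨿ Y)}
    (hz : z ∈ cr2sub F X Y) : F.map (coprod.map f (𝟙 Y)) z ∈ cr2sub F X' Y := by
  refine ⟨?_, ?_⟩
  · show F.map (r1 X' Y) (F.map (coprod.map f (𝟙 Y)) z) = 0
    rw [← fmap_comp_apply, map_comp_r1, fmap_comp_apply]
    rw [show F.map (r1 X Y) z = 0 from hz.1, map_zero]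
  · show F.map (r2 X' Y) (F.map (coprod.map f (𝟙 Y)) z) = 0
    rw [← fmap_comp_apply, map_comp_r2]
    exact hz.2

/-- The second cross-effect as a functor in the first variable: `X ↦ cr₂F(X,Y)`. -/
def cr2Fun (F : C ⥤ AddCommGrpCat.{w}) (Y : C) : C ⥤ AddCommGrpCat.{w} where
  obj X := AddCommGrpCat.of (cr2sub F X Y)
  map {X X'} f := AddCommGrpCat.ofHom <|
    AddMonoidHom.codRestrict
      ((show (F.obj (X ⨿ Y) : Type w) →+ F.obj (X' ⨿ Y) from AddCommGrpCat.Hom.hom <| F.map (coprod.map f (𝟙 Y))).comp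
        (cr2sub F X Y).subtype)
      (cr2sub F X' Y) (fun z => cr2sub_map f z.2)
  map_id X := by
    ext z
    show F.map (coprod.map (𝟙 X) (𝟙 Y)) z.1 = z.1
    rw [show coprod.map (𝟙 X) (𝟙 Y) = 𝟙 (X ⨿ Y) by apply coprod.hom_ext <;> simp]
    rw [F.map_id]; rfl
  map_comp {X X' X''} f g := by
    ext z
    show F.map (coprod.map (f ≫ g) (𝟙 Y)) z.1 =
      F.map (coprod.map g (𝟙 Y)) (F.map (coprod.map f (𝟙 Y)) z.1)
    rw [show coprod.map (f ≫ g) (𝟙 Y) = coprod.map f (𝟙 Y) ≫ coprod.map g (𝟙 Y) by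
      apply coprod.hom_ext <;> simp]
    rw [fmap_comp_apply]

lemma cr2sub_map' {F : C ⥤ AddCommGrpCat.{w}} {X Y Y' : C} (f : Y ⟶ Y') {z : F.obj (X ⨿ Y)}
    (hz : z ∈ cr2sub F X Y) : F.map (coprod.map (𝟙 X) f) z ∈ cr2sub F X Y' := by
  refine ⟨?_, ?_⟩
  · show F.map (r1 X Y') (F.map (coprod.map (𝟙 X) f) z) = 0
    rw [← fmap_comp_apply, map_comp_r1']
    exact hz.1
  · show F.map (r2 X Y') (F.map (coprod.map (𝟙 X) f) z) = 0
    rw [← fmap_comp_apply, map_comp_r2', fmap_comp_apply]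
    rw [show F.map (r2 X Y) z = 0 from hz.2, map_zero]

/-- The second cross-effect as a functor in the second variable: `Y ↦ cr₂F(X,Y)`. -/
def cr2FunR (F : C ⥤ AddCommGrpCat.{w}) (X : C) : C ⥤ AddCommGrpCat.{w} where
  obj Y := AddCommGrpCat.of (cr2sub F X Y)
  map {Y Y'} f := AddCommGrpCat.ofHom <|
    AddMonoidHom.codRestrict
      ((show (F.obj (X ⨿ Y) : Type w) →+ F.obj (X ⨿ Y') from AddCommGrpCat.Hom.hom <| F.map (coprod.map (𝟙 X) f)).comp
        (cr2sub F X Y).subtype)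
      (cr2sub F X Y') (fun z => cr2sub_map' f z.2)
  map_id Y := by
    ext z
    show F.map (coprod.map (𝟙 X) (𝟙 Y)) z.1 = z.1
    rw [show coprod.map (𝟙 X) (𝟙 Y) = 𝟙 (X ⨿ Y) by apply coprod.hom_ext <;> simp]
    rw [F.map_id]; rfl
  map_comp {Y Y' Y''} f g := by
    ext z
    show F.map (coprod.map (𝟙 X) (f ≫ g)) z.1 =
      F.map (coprod.map (𝟙 X) g) (F.map (coprod.map (𝟙 X) f) z.1)
    rw [show coprod.map (𝟙 X) (f ≫ g) = coprod.map (𝟙 X) f ≫ coprod.map (𝟙 X) g by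
      apply coprod.hom_ext <;> simp]
    rw [fmap_comp_apply]

/-- The first cross-effect `cr₁F(X) = ker(F(X) → F(0))` as a subgroup of `F(X)`. -/
def cr1sub (F : C ⥤ AddCommGrpCat.{w}) (X : C) : AddSubgroup (F.obj X) :=
  AddMonoidHom.ker (show (F.obj X : Type w) →+ F.obj (0 : C) from AddCommGrpCat.Hom.hom <| F.map (0 : X ⟶ 0))

lemma cr1sub_map {F : C ⥤ AddCommGrpCat.{w}} {X X' : C} (f : X ⟶ X') {z : F.obj X}
    (hz : z ∈ cr1sub F X) : F.map f z ∈ cr1sub F X' := by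
  show F.map (0 : X' ⟶ 0) (F.map f z) = 0
  rw [← fmap_comp_apply, comp_zero]
  exact hz

/-- The first cross-effect as a functor `X ↦ cr₁F(X)`. -/
def cr1Fun (F : C ⥤ AddCommGrpCat.{w}) : C ⥤ AddCommGrpCat.{w} where
  obj X := AddCommGrpCat.of (cr1sub F X)
  map {X X'} f := AddCommGrpCat.ofHom <|
    AddMonoidHom.codRestrict
      ((show (F.obj X : Type w) →+ F.obj X' from AddCommGrpCat.Hom.hom <| F.map f).comp (cr1sub F X).subtype)
      (cr1sub F X') (fun z => cr1sub_map f z.2)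
  map_id X := by
    ext z
    show F.map (𝟙 X) z.1 = z.1
    rw [F.map_id]; rfl
  map_comp {X X' X''} f g := by
    ext z
    exact fmap_comp_apply F f g z.1

/-- `crHigher F n Ys` is `cr_{n+2}F` as a functor in the first variable, i.e.
`X ↦ cr_{n+2}F(X, Ys 0, ..., Ys n)`, defined inductively by
`cr_{n}F(X₁,…,Xₙ) = cr₂(cr_{n−1}F(−,X₃,…,Xₙ))(X₁,X₂)`. -/
def crHigher (F : C ⥤ AddCommGrpCat.{w}) : (n : ℕ) → (Fin (n + 1) → C) → (C ⥤ AddCommGrpCat.{w})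
  | 0, Ys => cr2Fun F (Ys 0)
  | n+1, Ys => cr2Fun (crHigher F n (fun i => Ys i.succ)) (Ys 0)

/-- `crGrp F k Xs` is the value `cr_{k+1}F(Xs 0, …, Xs k)` of the `(k+1)`-st
cross-effect of `F`. -/
def crGrp (F : C ⥤ AddCommGrpCat.{w}) : (k : ℕ) → (Fin (k + 1) → C) → AddCommGrpCat.{w}
  | 0, Xs => AddCommGrpCat.of (cr1sub F (Xs 0))
  | k+1, Xs => (crHigher F k (fun i => Xs i.succ)).obj (Xs 0)

/-- `F` is polynomial of degree `≤ n`, i.e. `cr_{n+1}F = 0`. -/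
def IsPoly (F : C ⥤ AddCommGrpCat.{w}) (n : ℕ) : Prop :=
  ∀ Xs : Fin (n + 1) → C, Subsingleton (crGrp F n Xs)

/-- The ambient iterated binary coproduct in which the `(n+2)`-nd cross-effect lives. -/
def nestH : (n : ℕ) → (Fin (n + 1) → C) → C → C
  | 0, Ys, X => X ⨿ Ys 0
  | n+1, Ys, X => nestH n (fun i => Ys i.succ) (X ⨿ Ys 0)

/-- The canonical inclusion of `cr_{n+2}F(X, Ys)` into `F` of the ambient coproduct. -/
def crIncl (F : C ⥤ AddCommGrpCat.{w}) : (n : ℕ) → (Ys : Fin (n + 1) → C) → (X : C) →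
    (((crHigher F n Ys).obj X : Type w) →+ F.obj (nestH n Ys X))
  | 0, Ys, X => (cr2sub F X (Ys 0)).subtype
  | n+1, Ys, X =>
    (crIncl F n (fun i => Ys i.succ) (X ⨿ Ys 0)).comp
      (cr2sub (crHigher F n (fun i => Ys i.succ)) X (Ys 0)).subtype

/-- The iterated fold map on the ambient coproduct, relative to a map `g : Z ⟶ X`. -/
def foldNest (X : C) : (n : ℕ) → (Z : C) → (Z ⟶ X) → ((nestH n (fun _ => X) Z) ⟶ X)
  | 0, _, g => coprod.desc g (𝟙 X)
  | n+1, Z, g => foldNest X n (Z ⨿ X) (coprod.desc g (𝟙 X))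

/-- The image of `S_{n+2} : cr_{n+2}F(X,…,X) → F(X)` (inclusion followed by the fold map). -/
def imS (F : C ⥤ AddCommGrpCat.{w}) (n : ℕ) (X : C) : AddSubgroup (F.obj X) :=
  AddMonoidHom.range
    ((show (F.obj (nestH n (fun _ => X) X) : Type w) →+ F.obj X from
        AddCommGrpCat.Hom.hom <| F.map (foldNest X n X (𝟙 X))).comp
      (crIncl F n (fun _ => X) X))

/-- The image of `S_{k+1} : cr_{k+1}F(X,…,X) → F(X)`. -/
def imSk (F : C ⥤ AddCommGrpCat.{w}) : (k : ℕ) → (X : C) → AddSubgroup (F.obj X)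
  | 0, X => cr1sub F X
  | k+1, X => imS F k X

/-- The value `T_kF(X) = coker(S_{k+1} : cr_{k+1}F(X,…,X) → F(X))` of the `k`-th
Taylorization of `F`. -/
def TObj (F : C ⥤ AddCommGrpCat.{w}) (k : ℕ) (X : C) : Type w :=
  (F.obj X : Type w) ⧸ imSk F k X

instance (F : C ⥤ AddCommGrpCat.{w}) (k : ℕ) (X : C) : AddCommGroup (TObj F k X) :=
  QuotientAddGroup.Quotient.addCommGroup _

/-- The second cross-effect of `F` as a bifunctor `C × C ⥤ Ab`. -/
def cr2Bif (F : C ⥤ AddCommGrpCat.{w}) : C × C ⥤ AddCommGrpCat.{w} where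
  obj P := AddCommGrpCat.of (cr2sub F P.1 P.2)
  map {P Q} f := AddCommGrpCat.ofHom <|
    AddMonoidHom.codRestrict
      ((show (F.obj (P.1 ⨿ P.2) : Type w) →+ F.obj (Q.1 ⨿ Q.2) from
          AddCommGrpCat.Hom.hom <| F.map (coprod.map f.1 f.2)).comp (cr2sub F P.1 P.2).subtype)
      (cr2sub F Q.1 Q.2) (fun z => by
        have h1 : F.map (coprod.map f.1 (𝟙 P.2)) z.1 ∈ cr2sub F Q.1 P.2 := cr2sub_map f.1 z.2
        have h2 := cr2sub_map' (X := Q.1) f.2 h1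
        rw [← fmap_comp_apply] at h2
        rw [show coprod.map f.1 f.2 = coprod.map f.1 (𝟙 P.2) ≫ coprod.map (𝟙 Q.1) f.2 by
          apply coprod.hom_ext <;> simp]
        exact h2)
  map_id P := by
    ext z
    show F.map (coprod.map (𝟙 P.1) (𝟙 P.2)) z.1 = z.1
    rw [show coprod.map (𝟙 P.1) (𝟙 P.2) = 𝟙 (P.1 ⨿ P.2) by apply coprod.hom_ext <;> simp]
    rw [F.map_id]; rfl
  map_comp {P Q R} f g := by
    ext z
    show F.map (coprod.map (f.1 ≫ g.1) (f.2 ≫ g.2)) z.1 =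
      F.map (coprod.map g.1 g.2) (F.map (coprod.map f.1 f.2) z.1)
    rw [show coprod.map (f.1 ≫ g.1) (f.2 ≫ g.2) =
      coprod.map f.1 f.2 ≫ coprod.map g.1 g.2 by apply coprod.hom_ext <;> simp]
    rw [fmap_comp_apply]

/-- For a bifunctor `B`, the second cross-effect in the first variable:
`cr₂(B(−,Y))(X,X) ⊆ B(X∨X, Y)`. -/
def crV1 (B : C × C ⥤ AddCommGrpCat.{w}) (X Y : C) : AddSubgroup (B.obj (X ⨿ X, Y)) :=
  AddMonoidHom.ker (show (B.obj (X ⨿ X, Y) : Type w) →+ B.obj (X, Y) from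
    AddCommGrpCat.Hom.hom <| B.map ((r1 X X, 𝟙 Y) : (X ⨿ X, Y) ⟶ (X, Y))) ⊓
  AddMonoidHom.ker (show (B.obj (X ⨿ X, Y) : Type w) →+ B.obj (X, Y) from
    AddCommGrpCat.Hom.hom <| B.map ((r2 X X, 𝟙 Y) : (X ⨿ X, Y) ⟶ (X, Y)))

/-- For a bifunctor `B`, the second cross-effect in the second variable:
`cr₂(B(X,−))(Y,Y) ⊆ B(X, Y∨Y)`. -/
def crV2 (B : C × C ⥤ AddCommGrpCat.{w}) (X Y : C) : AddSubgroup (B.obj (X, Y ⨿ Y)) :=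
  AddMonoidHom.ker (show (B.obj (X, Y ⨿ Y) : Type w) →+ B.obj (X, Y) from
    AddCommGrpCat.Hom.hom <| B.map ((𝟙 X, r1 Y Y) : (X, Y ⨿ Y) ⟶ (X, Y))) ⊓
  AddMonoidHom.ker (show (B.obj (X, Y ⨿ Y) : Type w) →+ B.obj (X, Y) from
    AddCommGrpCat.Hom.hom <| B.map ((𝟙 X, r2 Y Y) : (X, Y ⨿ Y) ⟶ (X, Y)))

/-- The image of `S₂` applied in the first variable of the bifunctor `B`. -/
def N1 (B : C × C ⥤ AddCommGrpCat.{w}) (X Y : C) : AddSubgroup (B.obj (X, Y)) :=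
  (crV1 B X Y).map (show (B.obj (X ⨿ X, Y) : Type w) →+ B.obj (X, Y) from
    AddCommGrpCat.Hom.hom <| B.map ((fold X, 𝟙 Y) : (X ⨿ X, Y) ⟶ (X, Y)))

/-- The image of `S₂` applied in the second variable of the bifunctor `B`. -/
def N2 (B : C × C ⥤ AddCommGrpCat.{w}) (X Y : C) : AddSubgroup (B.obj (X, Y)) :=
  (crV2 B X Y).map (show (B.obj (X, Y ⨿ Y) : Type w) →+ B.obj (X, Y) from
    AddCommGrpCat.Hom.hom <| B.map ((𝟙 X, fold Y) : (X, Y ⨿ Y) ⟶ (X, Y)))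

/-- The value `T₁₁B(X,Y)` of the bilinearization of a bifunctor `B`: the quotient of
`B(X,Y)` by the images of the maps `S₂` applied in each variable separately. -/
def T11Obj (B : C × C ⥤ AddCommGrpCat.{w}) (X Y : C) : Type w :=
  (B.obj (X, Y) : Type w) ⧸ (N1 B X Y ⊔ N2 B X Y)

instance (B : C × C ⥤ AddCommGrpCat.{w}) (X Y : C) : AddCommGroup (T11Obj B X Y) :=
  QuotientAddGroup.Quotient.addCommGroup _

/-- A bifunctor is bireduced if it vanishes whenever one variable is the zero object. -/
def Bireduced (B : C × C ⥤ AddCommGrpCat.{w}) : Prop :=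
  ∀ X : C, Subsingleton (B.obj (X, (0 : C))) ∧ Subsingleton (B.obj ((0 : C), X))

/- ### Induced maps on cross-effects -/

/-- A natural transformation induces a map on second cross-effects (first variable form). -/
def cr2MapL {F G : C ⥤ AddCommGrpCat.{w}} (α : F ⟶ G) (Y : C) : cr2Fun F Y ⟶ cr2Fun G Y where
  app X := AddCommGrpCat.ofHom <|
    AddMonoidHom.codRestrict
      ((show (F.obj (X ⨿ Y) : Type w) →+ G.obj (X ⨿ Y) from AddCommGrpCat.Hom.hom <| α.app (X ⨿ Y)).comp
        (cr2sub F X Y).subtype)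
      (cr2sub G X Y) (fun z => by
        have natr1 := congrArg (fun (h : F.obj (X ⨿ Y) ⟶ G.obj X) => h z.1)
          (α.naturality (r1 X Y))
        have natr2 := congrArg (fun (h : F.obj (X ⨿ Y) ⟶ G.obj Y) => h z.1)
          (α.naturality (r2 X Y))
        constructor
        · show G.map (r1 X Y) (α.app (X ⨿ Y) z.1) = 0
          have : α.app X (F.map (r1 X Y) z.1) = G.map (r1 X Y) (α.app (X ⨿ Y) z.1) := natr1
          rw [← this, show F.map (r1 X Y) z.1 = 0 from z.2.1, map_zero]
        · show G.map (r2 X Y) (α.app (X ⨿ Y) z.1) = 0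
          have : α.app Y (F.map (r2 X Y) z.1) = G.map (r2 X Y) (α.app (X ⨿ Y) z.1) := natr2
          rw [← this, show F.map (r2 X Y) z.1 = 0 from z.2.2, map_zero])
  naturality {X X'} f := by
    ext z
    apply Subtype.ext
    show α.app (X' ⨿ Y) (F.map (coprod.map f (𝟙 Y)) z.1) =
      G.map (coprod.map f (𝟙 Y)) (α.app (X ⨿ Y) z.1)
    exact congrArg (fun (h : F.obj (X ⨿ Y) ⟶ G.obj (X' ⨿ Y)) => h z.1)
      (α.naturality (coprod.map f (𝟙 Y)))

/-- A natural transformation induces a map on first cross-effects. -/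
def cr1Map {F G : C ⥤ AddCommGrpCat.{w}} (α : F ⟶ G) : cr1Fun F ⟶ cr1Fun G where
  app X := AddCommGrpCat.ofHom <|
    AddMonoidHom.codRestrict
      ((show (F.obj X : Type w) →+ G.obj X from AddCommGrpCat.Hom.hom <| α.app X).comp (cr1sub F X).subtype)
      (cr1sub G X) (fun z => by
        show G.map (0 : X ⟶ 0) (α.app X z.1) = 0
        have : α.app (0 : C) (F.map (0 : X ⟶ 0) z.1) = G.map (0 : X ⟶ 0) (α.app X z.1) :=
          congrArg (fun (h : F.obj X ⟶ G.obj (0 : C)) => h z.1) (α.naturality (0 : X ⟶ 0))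
        rw [← this, show F.map (0 : X ⟶ 0) z.1 = 0 from z.2, map_zero])
  naturality {X X'} f := by
    ext z
    apply Subtype.ext
    show α.app X' (F.map f z.1) = G.map f (α.app X z.1)
    exact congrArg (fun (h : F.obj X ⟶ G.obj X') => h z.1) (α.naturality f)

/-- A natural transformation induces maps on all higher cross-effects. -/
def crHigherMap {F G : C ⥤ AddCommGrpCat.{w}} (α : F ⟶ G) :
    (n : ℕ) → (Ys : Fin (n + 1) → C) → (crHigher F n Ys ⟶ crHigher G n Ys)
  | 0, Ys => cr2MapL α (Ys 0)
  | n+1, Ys => cr2MapL (crHigherMap α n (fun i => Ys i.succ)) (Ys 0)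

/-- The map induced by a natural transformation on the value of the `(k+1)`-st cross-effect. -/
def crGrpMap {F G : C ⥤ AddCommGrpCat.{w}} (α : F ⟶ G) :
    (k : ℕ) → (Xs : Fin (k + 1) → C) → (crGrp F k Xs ⟶ crGrp G k Xs)
  | 0, Xs => (cr1Map α).app (Xs 0)
  | k+1, Xs => (crHigherMap α k (fun i => Xs i.succ)).app (Xs 0)

/- ### The reduced standard projective functor `U_X` -/

/-- The subgroup of `ℤ[C(X,Z)]` spanned by the zero morphism. -/
def USub (X Z : C) : AddSubgroup ((X ⟶ Z) →₀ ℤ) :=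
  AddSubgroup.closure {Finsupp.single (0 : X ⟶ Z) 1}

/-- The value `U_X(Z) = ℤ[C(X,Z)]/ℤ[0]` of the reduced standard projective functor. -/
def UObj (X Z : C) : Type v := ((X ⟶ Z) →₀ ℤ) ⧸ USub X Z

instance (X Z : C) : AddCommGroup (UObj X Z) := QuotientAddGroup.Quotient.addCommGroup _

lemma USub_le_comap (X : C) {Z Z' : C} (g : Z ⟶ Z') :
    USub X Z ≤ AddSubgroup.comap
      (Finsupp.mapDomain.addMonoidHom (fun φ : X ⟶ Z => φ ≫ g)) (USub X Z') := by
  rw [USub, AddSubgroup.closure_le]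
  rintro x rfl
  show Finsupp.mapDomain.addMonoidHom (fun φ : X ⟶ Z => φ ≫ g)
      (Finsupp.single (0 : X ⟶ Z) 1) ∈ USub X Z'
  rw [Finsupp.mapDomain.addMonoidHom_apply, Finsupp.mapDomain_single, zero_comp]
  exact AddSubgroup.subset_closure rfl

/-- The reduced standard projective functor `U_X : C ⥤ Ab` associated with `X`,
the quotient of `Z ↦ ℤ[C(X,Z)]` by the subfunctor spanned by the zero morphisms. -/
def UFun (X : C) : C ⥤ AddCommGrpCat.{v} where
  obj Z := AddCommGrpCat.of (UObj X Z)
  map {Z Z'} g := AddCommGrpCat.ofHom <|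
    QuotientAddGroup.map (USub X Z) (USub X Z')
      (Finsupp.mapDomain.addMonoidHom (fun φ : X ⟶ Z => φ ≫ g)) (USub_le_comap X g)
  map_id Z := by
    ext x
    refine QuotientAddGroup.induction_on x (fun z => ?_)
    change QuotientAddGroup.map (USub X Z) (USub X Z) _ (USub_le_comap X (𝟙 Z))
      (QuotientAddGroup.mk z) = QuotientAddGroup.mk z
    rw [QuotientAddGroup.map_mk]
    congr 1
    simp only [Finsupp.mapDomain.addMonoidHom_apply, Category.comp_id]
    exact Finsupp.mapDomain_id
  map_comp {Z Z' Z''} g h := by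
    ext x
    refine QuotientAddGroup.induction_on x (fun z => ?_)
    change QuotientAddGroup.map (USub X Z) (USub X Z'') _ (USub_le_comap X (g ≫ h))
      (QuotientAddGroup.mk z) =
      QuotientAddGroup.map (USub X Z') (USub X Z'') _ (USub_le_comap X h)
      (QuotientAddGroup.map (USub X Z) (USub X Z') _ (USub_le_comap X g)
        (QuotientAddGroup.mk z))
    rw [QuotientAddGroup.map_mk, QuotientAddGroup.map_mk, QuotientAddGroup.map_mk]
    congr 1
    simp only [Finsupp.mapDomain.addMonoidHom_apply, ← Finsupp.mapDomain_comp]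
    congr 1
    funext φ
    simp

/-- The class of a morphism `φ : X ⟶ Z` in `U_X(Z)`. -/
def uOf {X Z : C} (φ : X ⟶ Z) : UObj X Z := QuotientAddGroup.mk (Finsupp.single φ (1 : ℤ))

/-- The iterated sum `E^{∨k}` of copies of `E` (with `E^{∨0} = 0`). -/
def pow (E : C) : ℕ → C
  | 0 => 0
  | n+1 => pow E n ⨿ E

/- ### Auxiliary lemmas -/

section Aux

variable {F G : C ⥤ AddCommGrpCat.{w}}

lemma app_nat (φ : F ⟶ G) {X Y : C} (f : X ⟶ Y) (x : F.obj X) :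
    φ.app Y (F.map f x) = G.map f (φ.app X x) :=
  congrArg (fun (h : F.obj X ⟶ G.obj Y) => h x) (φ.naturality f)

lemma map_zero_of_reduced (hF : Reduced F) {X Y : C} (x : F.obj X) :
    F.map (0 : X ⟶ Y) x = 0 := by
  haveI : Subsingleton (F.obj (0 : C)) := hF
  have h : (0 : X ⟶ Y) = (0 : X ⟶ (0:C)) ≫ (0 : (0:C) ⟶ Y) := zero_comp.symm
  rw [h, fmap_comp_apply, show F.map (0 : X ⟶ (0:C)) x = 0 from Subsingleton.elim _ _,
    map_zero]

lemma inl_r1 (X Y : C) : (coprod.inl : X ⟶ X ⨿ Y) ≫ r1 X Y = 𝟙 X := coprod.inl_desc _ _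
lemma inr_r1 (X Y : C) : (coprod.inr : Y ⟶ X ⨿ Y) ≫ r1 X Y = 0 := coprod.inr_desc _ _
lemma inl_r2 (X Y : C) : (coprod.inl : X ⟶ X ⨿ Y) ≫ r2 X Y = 0 := coprod.inl_desc _ _
lemma inr_r2 (X Y : C) : (coprod.inr : Y ⟶ X ⨿ Y) ≫ r2 X Y = 𝟙 Y := coprod.inr_desc _ _

lemma sec_r1 (hF : Reduced F) {X Y : C} (a : F.obj X) (b : F.obj Y) :
    F.map (r1 X Y) (F.map coprod.inl a + F.map coprod.inr b) = a := by
  rw [map_add, ← fmap_comp_apply, ← fmap_comp_apply, inl_r1, inr_r1, F.map_id,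
    map_zero_of_reduced hF, add_zero]
  rfl

lemma sec_r2 (hF : Reduced F) {X Y : C} (a : F.obj X) (b : F.obj Y) :
    F.map (r2 X Y) (F.map coprod.inl a + F.map coprod.inr b) = b := by
  rw [map_add, ← fmap_comp_apply, ← fmap_comp_apply, inl_r2, inr_r2, F.map_id,
    map_zero_of_reduced hF, zero_add]
  rfl

lemma cr2MapL_bij (φ : F ⟶ G) (X Y : C)
    (hX : Function.Injective (φ.app X)) (hY : Function.Injective (φ.app Y))
    (hXY : Function.Bijective (φ.app (X ⨿ Y))) :
    Function.Bijective ((cr2MapL φ Y).app X) := by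
  constructor
  · intro a b hab
    exact Subtype.ext (hXY.1 (congrArg Subtype.val hab))
  · rintro ⟨w, hw⟩
    obtain ⟨z, hz⟩ := hXY.2 w
    have h1 : F.map (r1 X Y) z = 0 := by
      apply hX
      rw [app_nat, hz, show G.map (r1 X Y) w = 0 from hw.1, map_zero]
    have h2 : F.map (r2 X Y) z = 0 := by
      apply hY
      rw [app_nat, hz, show G.map (r2 X Y) w = 0 from hw.2, map_zero]
    exact ⟨⟨z, h1, h2⟩, Subtype.ext hz⟩

lemma app_coprod_bij (hF : Reduced F) (φ : F ⟶ G) (X Y : C)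
    (hX : Function.Bijective (φ.app X)) (hY : Function.Bijective (φ.app Y))
    (hc : Function.Bijective ((cr2MapL φ Y).app X)) :
    Function.Bijective (φ.app (X ⨿ Y)) := by
  constructor
  · rw [injective_iff_map_eq_zero]
    intro z hz
    have h1 : F.map (r1 X Y) z = 0 := by
      apply hX.1
      rw [app_nat, hz, map_zero, map_zero]
    have h2 : F.map (r2 X Y) z = 0 := by
      apply hY.1
      rw [app_nat, hz, map_zero, map_zero]
    have hker : (⟨z, h1, h2⟩ : cr2sub F X Y) = 0 :=
      hc.1 (a₁ := ⟨z, h1, h2⟩) (a₂ := 0) (Subtype.ext (by rw [map_zero]; exact hz))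
    exact congrArg Subtype.val hker
  · intro w
    obtain ⟨a, ha⟩ := hX.2 (G.map (r1 X Y) w)
    obtain ⟨b, hb⟩ := hY.2 (G.map (r2 X Y) w)
    set s : F.obj (X ⨿ Y) := F.map coprod.inl a + F.map coprod.inr b with hs
    have hps1 : G.map (r1 X Y) (w - φ.app (X ⨿ Y) s) = 0 := by
      rw [map_sub, ← app_nat, hs, sec_r1 hF, ha, sub_self]
    have hps2 : G.map (r2 X Y) (w - φ.app (X ⨿ Y) s) = 0 := by
      rw [map_sub, ← app_nat, hs, sec_r2 hF, hb, sub_self]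
    obtain ⟨⟨z, hz1, hz2⟩, hzeq⟩ := hc.2 ⟨w - φ.app (X ⨿ Y) s, hps1, hps2⟩
    refine ⟨z + s, ?_⟩
    have hval : φ.app (X ⨿ Y) z = w - φ.app (X ⨿ Y) s := congrArg Subtype.val hzeq
    rw [map_add, hval, sub_add_cancel]

lemma bij_of_subsingleton {A B : AddCommGrpCat.{w}} [Subsingleton (A : Type w)]
    [Subsingleton (B : Type w)] (f : A ⟶ B) : Function.Bijective f :=
  ⟨fun a b _ => Subsingleton.elim a b, fun b => ⟨0, Subsingleton.elim _ b⟩⟩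

lemma bij_retract (φ : F ⟶ G) {A B : C} (i : A ⟶ B) (r : B ⟶ A) (hir : i ≫ r = 𝟙 A)
    (hB : Function.Bijective (φ.app B)) : Function.Bijective (φ.app A) := by
  constructor
  · intro a a' h
    have h2 : F.map i a = F.map i a' := hB.1 (by rw [app_nat, app_nat, h])
    have h3 := congrArg (F.map r) h2
    rw [← fmap_comp_apply, ← fmap_comp_apply, hir, F.map_id] at h3
    exact h3
  · intro b
    obtain ⟨z, hz⟩ := hB.2 (G.map i b)
    refine ⟨F.map r z, ?_⟩
    rw [app_nat, hz, ← fmap_comp_apply, hir, G.map_id]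
    rfl

lemma pow_retract (E : C) {k m : ℕ} (h : k ≤ m) :
    ∃ (i : pow E k ⟶ pow E m) (r : pow E m ⟶ pow E k), i ≫ r = 𝟙 _ := by
  induction m with
  | zero =>
    obtain rfl : k = 0 := Nat.le_zero.mp h
    exact ⟨𝟙 _, 𝟙 _, by simp⟩
  | succ m ih =>
    rcases Nat.lt_or_ge k (m+1) with h' | h'
    · obtain ⟨i, r, hir⟩ := ih (Nat.lt_succ_iff.mp h')
      refine ⟨i ≫ coprod.inl, r1 _ _ ≫ r, ?_⟩
      show ((i ≫ (coprod.inl : pow E m ⟶ pow E m ⨿ E)) : pow E k ⟶ pow E m ⨿ E) ≫ r1 (pow E m) E ≫ r = 𝟙 _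
      rw [Category.assoc, ← Category.assoc (coprod.inl), inl_r1, Category.id_comp, hir]
    · obtain rfl : k = m + 1 := le_antisymm h h'
      exact ⟨𝟙 _, 𝟙 _, by simp⟩

lemma poly0_subsingleton (hF : Reduced F) (h : IsPoly F 0) (X : C) :
    Subsingleton (F.obj X) := by
  haveI : Subsingleton (F.obj (0 : C)) := hF
  have hs := h (fun _ => X)
  constructor
  intro a b
  have ha : a ∈ cr1sub F X := show F.map (0 : X ⟶ (0:C)) a = 0 from Subsingleton.elim _ _
  have hb : b ∈ cr1sub F X := show F.map (0 : X ⟶ (0:C)) b = 0 from Subsingleton.elim _ _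
  have := @Subsingleton.elim _ hs ⟨a, ha⟩ ⟨b, hb⟩
  exact congrArg Subtype.val this

lemma from_zero_eq_zero {A : C} (f : (0:C) ⟶ A) : f = 0 := by
  rw [show f = 𝟙 (0:C) ≫ f from (Category.id_comp f).symm, Limits.id_zero, zero_comp]

lemma r2_inr_id (Y : C) : r2 (0:C) Y ≫ coprod.inr = 𝟙 ((0:C) ⨿ Y) := by
  apply coprod.hom_ext
  · rw [show (coprod.inl : (0:C) ⟶ (0:C) ⨿ Y) = 0 from from_zero_eq_zero _, zero_comp,
      zero_comp]
  · rw [← Category.assoc, inr_r2, Category.id_comp, Category.comp_id]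

lemma cr2Fun_reduced (F : C ⥤ AddCommGrpCat.{w}) (Y : C) : Reduced (cr2Fun F Y) := by
  constructor
  intro a b
  have h : ∀ z : F.obj ((0:C) ⨿ Y), F.map (r2 (0:C) Y) z = 0 → z = 0 := by
    intro z hz
    have h1 : F.map (r2 (0:C) Y ≫ (coprod.inr : Y ⟶ (0:C) ⨿ Y)) z
        = F.map (coprod.inr : Y ⟶ (0:C) ⨿ Y) (F.map (r2 (0:C) Y) z) :=
      fmap_comp_apply F _ _ z
    rw [r2_inr_id, F.map_id, hz, map_zero] at h1
    exact h1
  exact Subtype.ext (by rw [h a.1 a.2.2, h b.1 b.2.2])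

lemma objBij_cr2MapL (φ : F ⟶ G) (h : ∀ Z : C, Function.Bijective (φ.app Z)) (Y X : C) :
    Function.Bijective ((cr2MapL φ Y).app X) :=
  cr2MapL_bij φ X Y (h X).1 (h Y).1 (h _)

lemma objBij_crHigherMap (φ : F ⟶ G) (h : ∀ Z : C, Function.Bijective (φ.app Z)) :
    ∀ (m : ℕ) (Ys : Fin (m+1) → C) (X : C),
      Function.Bijective ((crHigherMap φ m Ys).app X)
  | 0, Ys, X => objBij_cr2MapL φ h (Ys 0) X
  | m+1, Ys, X =>
    objBij_cr2MapL (crHigherMap φ m (fun i => Ys i.succ))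
      (fun Z => objBij_crHigherMap φ h m _ Z) (Ys 0) X

lemma cr1Map_bij_of (φ : F ⟶ G) (h : ∀ Z : C, Function.Bijective (φ.app Z)) (X : C) :
    Function.Bijective ((cr1Map φ).app X) := by
  constructor
  · intro a b hab
    exact Subtype.ext ((h X).1 (congrArg Subtype.val hab))
  · rintro ⟨y, hy⟩
    obtain ⟨x, hx⟩ := (h X).2 y
    have hm : x ∈ cr1sub F X := by
      apply (h (0:C)).1
      rw [app_nat, hx, show G.map (0 : X ⟶ (0:C)) y = 0 from hy, map_zero]
    exact ⟨⟨x, hm⟩, Subtype.ext hx⟩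

lemma crGrpMap_bij_of (φ : F ⟶ G) (h : ∀ Z : C, Function.Bijective (φ.app Z)) :
    ∀ (m : ℕ) (Xs : Fin (m+1) → C), Function.Bijective (crGrpMap φ m Xs)
  | 0, Xs => cr1Map_bij_of φ h (Xs 0)
  | m+1, Xs => objBij_crHigherMap φ h m _ (Xs 0)

lemma cr1Map_bij_iff (hF : Reduced F) (hG : Reduced G) (φ : F ⟶ G) (X : C) :
    Function.Bijective ((cr1Map φ).app X) ↔ Function.Bijective (φ.app X) := by
  haveI : Subsingleton (F.obj (0:C)) := hF
  haveI : Subsingleton (G.obj (0:C)) := hG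
  have hmF : ∀ x : F.obj X, x ∈ cr1sub F X :=
    fun x => show F.map (0 : X ⟶ (0:C)) x = 0 from Subsingleton.elim _ _
  have hmG : ∀ y : G.obj X, y ∈ cr1sub G X :=
    fun y => show G.map (0 : X ⟶ (0:C)) y = 0 from Subsingleton.elim _ _
  constructor
  · intro hb
    constructor
    · intro x x' hxx
      have := hb.1 (a₁ := ⟨x, hmF x⟩) (a₂ := ⟨x', hmF x'⟩) (Subtype.ext hxx)
      exact congrArg Subtype.val this
    · intro y
      obtain ⟨⟨x, _⟩, hx⟩ := hb.2 ⟨y, hmG y⟩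
      exact ⟨x, congrArg Subtype.val hx⟩
  · intro hb
    constructor
    · intro a b hab
      exact Subtype.ext (hb.1 (congrArg Subtype.val hab))
    · rintro ⟨y, _⟩
      obtain ⟨x, hx⟩ := hb.2 y
      exact ⟨⟨x, hmF x⟩, Subtype.ext hx⟩

/- ### Fin gymnastics -/

lemma snoc_zero' {m : ℕ} (Ys : Fin (m+1) → C) (Y : C) :
    (Fin.snoc Ys Y : Fin (m+2) → C) 0 = Ys 0 := by
  rw [show (0 : Fin (m+2)) = Fin.castSucc (0 : Fin (m+1)) from (Fin.castSucc_zero).symm,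
    Fin.snoc_castSucc]

lemma snoc_succ_zero (Ys : Fin 1 → C) (Y : C) :
    (Fin.snoc Ys Y : Fin 2 → C) (Fin.succ 0) = Y := by
  rw [show Fin.succ (0 : Fin 1) = Fin.last 1 from by decide, Fin.snoc_last]

lemma tail_snoc_fun {m : ℕ} (Ys : Fin (m+2) → C) (Y : C) :
    (fun i : Fin (m+2) => (Fin.snoc Ys Y : Fin (m+3) → C) i.succ)
      = Fin.snoc (fun i : Fin (m+1) => Ys i.succ) Y := by
  funext i
  refine Fin.lastCases ?_ ?_ i
  · show (Fin.snoc Ys Y : Fin (m+3) → C) (Fin.last (m+1)).succ = _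
    rw [Fin.succ_last, Fin.snoc_last, Fin.snoc_last]
  · intro j
    show (Fin.snoc Ys Y : Fin (m+3) → C) (Fin.castSucc j).succ = _
    rw [Fin.succ_castSucc, Fin.snoc_castSucc, Fin.snoc_castSucc]

lemma snoc_const (E : C) (m : ℕ) :
    (Fin.snoc (fun _ : Fin (m+1) => E) E : Fin (m+2) → C) = fun _ => E := by
  funext i
  refine Fin.lastCases ?_ ?_ i
  · exact Fin.snoc_last _ _
  · intro j
    exact Fin.snoc_castSucc _ _ j

/- ### crHigher and snoc -/

lemma crHigher_snoc (F : C ⥤ AddCommGrpCat.{w}) (Y : C) :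
    ∀ (m : ℕ) (Ys : Fin (m+1) → C),
      crHigher (cr2Fun F Y) m Ys = crHigher F (m+1) (Fin.snoc Ys Y)
  | 0, Ys => by
    show cr2Fun (cr2Fun F Y) (Ys 0)
      = cr2Fun (cr2Fun F ((Fin.snoc Ys Y : Fin 2 → C) (Fin.succ 0)))
          ((Fin.snoc Ys Y : Fin 2 → C) 0)
    rw [snoc_succ_zero, snoc_zero']
  | m+1, Ys => by
    show cr2Fun (crHigher (cr2Fun F Y) m (fun i => Ys i.succ)) (Ys 0)
      = cr2Fun (crHigher F (m+1) (fun i => (Fin.snoc Ys Y : Fin (m+3) → C) i.succ))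
          ((Fin.snoc Ys Y : Fin (m+3) → C) 0)
    rw [crHigher_snoc F Y m (fun i => Ys i.succ), tail_snoc_fun, snoc_zero']

lemma cr2MapL_congrHEq {F₁ G₁ F₂ G₂ : C ⥤ AddCommGrpCat.{w}} (hF : F₁ = F₂) (hG : G₁ = G₂)
    {α : F₁ ⟶ G₁} {β : F₂ ⟶ G₂} (h : HEq α β) (Y : C) :
    HEq (cr2MapL α Y) (cr2MapL β Y) := by
  subst hF; subst hG
  rw [eq_of_heq h]

lemma crHigherMap_snoc (φ : F ⟶ G) (Y : C) :
    ∀ (m : ℕ) (Ys : Fin (m+1) → C),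
      HEq (crHigherMap (cr2MapL φ Y) m Ys) (crHigherMap φ (m+1) (Fin.snoc Ys Y))
  | 0, Ys => by
    show HEq (cr2MapL (cr2MapL φ Y) (Ys 0))
      (cr2MapL (cr2MapL φ ((Fin.snoc Ys Y : Fin 2 → C) (Fin.succ 0)))
        ((Fin.snoc Ys Y : Fin 2 → C) 0))
    rw [snoc_succ_zero, snoc_zero']
  | m+1, Ys => by
    show HEq (cr2MapL (crHigherMap (cr2MapL φ Y) m (fun i => Ys i.succ)) (Ys 0))
      (cr2MapL (crHigherMap φ (m+1) (fun i => (Fin.snoc Ys Y : Fin (m+3) → C) i.succ))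
        ((Fin.snoc Ys Y : Fin (m+3) → C) 0))
    rw [tail_snoc_fun, snoc_zero']
    exact cr2MapL_congrHEq (crHigher_snoc F Y m _) (crHigher_snoc G Y m _)
      (crHigherMap_snoc φ Y m _) (Ys 0)

lemma bij_transfer {F₁ G₁ F₂ G₂ : C ⥤ AddCommGrpCat.{w}} (hF : F₁ = F₂) (hG : G₁ = G₂)
    {α : F₁ ⟶ G₁} {β : F₂ ⟶ G₂} (h : HEq α β) (X : C) :
    Function.Bijective (α.app X) ↔ Function.Bijective (β.app X) := by
  subst hF; subst hG
  rw [eq_of_heq h]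

/- ### Degree of cross-effects -/

lemma degcr (F : C ⥤ AddCommGrpCat.{w}) (Y : C) (n : ℕ) (h : IsPoly F (n+1)) :
    IsPoly (cr2Fun F Y) n := by
  intro Xs
  cases n with
  | zero =>
    have key : Subsingleton ((cr2Fun F ((Fin.cons (Xs 0) (fun _ => Y) : Fin 2 → C)
        (Fin.succ 0))).obj ((Fin.cons (Xs 0) (fun _ => Y) : Fin 2 → C) 0)) :=
      h (Fin.cons (Xs 0) (fun _ => Y))
    rw [show (Fin.cons (Xs 0) (fun _ => Y) : Fin 2 → C) (Fin.succ 0) = Y from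
        Fin.cons_succ _ _ 0,
      show (Fin.cons (Xs 0) (fun _ => Y) : Fin 2 → C) 0 = Xs 0 from Fin.cons_zero _ _] at key
    exact ⟨fun a b => Subtype.ext (@Subsingleton.elim _ key a.1 b.1)⟩
  | succ m =>
    have key : Subsingleton ((crHigher F (m+1)
        (fun i : Fin (m+2) => (Fin.cons (Xs 0) (Fin.snoc (fun i : Fin (m+1) => Xs i.succ) Y)
          : Fin (m+3) → C) i.succ)).obj
        ((Fin.cons (Xs 0) (Fin.snoc (fun i : Fin (m+1) => Xs i.succ) Y)
          : Fin (m+3) → C) 0)) :=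
      h (Fin.cons (Xs 0) (Fin.snoc (fun i : Fin (m+1) => Xs i.succ) Y))
    have h1 : (fun i : Fin (m+2) => (Fin.cons (Xs 0)
        (Fin.snoc (fun i : Fin (m+1) => Xs i.succ) Y) : Fin (m+3) → C) i.succ)
        = Fin.snoc (fun i : Fin (m+1) => Xs i.succ) Y :=
      funext fun i => Fin.cons_succ _ _ i
    have h2 : (Fin.cons (Xs 0) (Fin.snoc (fun i : Fin (m+1) => Xs i.succ) Y)
        : Fin (m+3) → C) 0 = Xs 0 := Fin.cons_zero _ _
    rw [h1, h2] at key
    show Subsingleton ((crHigher (cr2Fun F Y) m (fun i => Xs i.succ)).obj (Xs 0))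
    rw [crHigher_snoc F Y m (fun i => Xs i.succ)]
    exact key

/- ### The two main inductions -/

lemma propagate (E : C) :
    ∀ (n : ℕ) (F G : C ⥤ AddCommGrpCat.{w}), Reduced F → Reduced G → IsPoly F n → IsPoly G n →
      ∀ (φ : F ⟶ G), (∀ k, k ≤ n → Function.Bijective (φ.app (pow E k))) →
      ∀ k, Function.Bijective (φ.app (pow E k))
  | 0, F, G, hF, hG, hFp, _, φ, _, k => by
    haveI := poly0_subsingleton hF hFp (pow E k)
    haveI := poly0_subsingleton hG (by assumption) (pow E k)
    exact bij_of_subsingleton _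
  | n+1, F, G, hF, hG, hFp, hGp, φ, hseed, k => by
    have hE : Function.Bijective (φ.app E) :=
      bij_retract φ coprod.inr (r2 (0:C) E) (inr_r2 _ _) (hseed 1 (by omega))
    have hseed' : ∀ j, j ≤ n → Function.Bijective ((cr2MapL φ E).app (pow E j)) :=
      fun j hj => cr2MapL_bij φ _ _ (hseed j (by omega)).1 hE.1 (hseed (j+1) (by omega))
    have hall' := propagate E n (cr2Fun F E) (cr2Fun G E) (cr2Fun_reduced F E)
      (cr2Fun_reduced G E) (degcr F E n hFp) (degcr G E n hGp) (cr2MapL φ E) hseed'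
    induction k with
    | zero =>
      haveI : Subsingleton (F.obj (pow E 0)) := hF
      haveI : Subsingleton (G.obj (pow E 0)) := hG
      exact bij_of_subsingleton _
    | succ j ihj => exact app_coprod_bij hF φ (pow E j) E ihj hE (hall' j)

lemma mlemma (E : C) :
    ∀ (n : ℕ) (F G : C ⥤ AddCommGrpCat.{w}), Reduced F → Reduced G → IsPoly F n → IsPoly G n →
      ∀ (φ : F ⟶ G),
      (∀ k, 1 ≤ k → k ≤ n → Function.Bijective (crGrpMap φ (k-1) (fun _ => E))) →
      ∀ k, Function.Bijective (φ.app (pow E k))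
  | 0, F, G, hF, hG, hFp, hGp, φ, _, k => by
    haveI := poly0_subsingleton hF hFp (pow E k)
    haveI := poly0_subsingleton hG hGp (pow E k)
    exact bij_of_subsingleton _
  | n+1, F, G, hF, hG, hFp, hGp, φ, hcr, k => by
    have hE : Function.Bijective (φ.app E) :=
      (cr1Map_bij_iff hF hG φ E).1 (hcr 1 (by omega) (by omega))
    have hseed' : ∀ j, 1 ≤ j → j ≤ n →
        Function.Bijective (crGrpMap (cr2MapL φ E) (j-1) (fun _ => E)) := by
      intro j hj1 hjn
      match j, hj1 with
      | 1, _ =>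
        show Function.Bijective ((cr1Map (cr2MapL φ E)).app E)
        refine (cr1Map_bij_iff (cr2Fun_reduced F E) (cr2Fun_reduced G E) _ E).2 ?_
        exact hcr 2 (by omega) (by omega)
      | (m+2), _ =>
        show Function.Bijective ((crHigherMap (cr2MapL φ E) m (fun _ => E)).app E)
        have hx := crHigherMap_snoc φ E m (fun _ => E)
        rw [snoc_const E m] at hx
        have hFe : crHigher (cr2Fun F E) m (fun _ => E) = crHigher F (m+1) (fun _ => E) :=
          (crHigher_snoc F E m _).trans (congrArg (crHigher F (m+1)) (snoc_const E m))
        have hGe : crHigher (cr2Fun G E) m (fun _ => E) = crHigher G (m+1) (fun _ => E) :=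
          (crHigher_snoc G E m _).trans (congrArg (crHigher G (m+1)) (snoc_const E m))
        refine (bij_transfer hFe hGe hx E).2 ?_
        exact hcr (m+3) (by omega) (by omega)
    have hall' := mlemma E n (cr2Fun F E) (cr2Fun G E) (cr2Fun_reduced F E)
      (cr2Fun_reduced G E) (degcr F E n hFp) (degcr G E n hGp) (cr2MapL φ E) hseed'
    induction k with
    | zero =>
      haveI : Subsingleton (F.obj (pow E 0)) := hF
      haveI : Subsingleton (G.obj (pow E 0)) := hG
      exact bij_of_subsingleton _
    | succ j ihj => exact app_coprod_bij hF φ (pow E j) E ihj hE (hall' j)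

/- ### Iso / bijectivity translation in `AddCommGrp` -/

lemma isIso_of_bij {A B : AddCommGrpCat.{w}} (f : A ⟶ B) (hf : Function.Bijective f) :
    IsIso f := by
  let e := AddEquiv.ofBijective (show (A : Type w) →+ B from f.hom) hf
  refine ⟨AddCommGrpCat.ofHom e.symm.toAddMonoidHom, ?_, ?_⟩
  · ext x
    exact e.symm_apply_apply x
  · ext x
    exact e.apply_symm_apply x

lemma bij_of_isIso {A B : AddCommGrpCat.{w}} (f : A ⟶ B) (h : IsIso f) :
    Function.Bijective f := by
  refine Function.bijective_iff_has_inverse.2 ⟨inv f, fun a => ?_, fun b => ?_⟩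
  · exact congrArg (fun (h : A ⟶ A) => h a) (IsIso.hom_inv_id f)
  · exact congrArg (fun (h : B ⟶ B) => h b) (IsIso.inv_hom_id f)

end Aux

theorem statement3 (E : C) (hgen : ∀ X : C, ∃ k : ℕ, Nonempty (X ≅ pow E k)) (n : ℕ)
    {F G : C ⥤ AddCommGrpCat.{w}} (hF : Reduced F) (hG : Reduced G)
    (hFp : IsPoly F n) (hGp : IsPoly G n) (φ : F ⟶ G) :
    List.TFAE [IsIso φ,
      ∀ k ≤ n, IsIso (φ.app (pow E k)),
      IsIso (φ.app (pow E n)),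
      ∀ k, 1 ≤ k → k ≤ n → IsIso (crGrpMap φ (k - 1) (fun _ => E))] := by
  tfae_have 1 → 2 := by
    intro h k _
    haveI := h
    infer_instance
  tfae_have 2 → 3 := fun h => h n le_rfl
  tfae_have 3 → 1 := by
    intro h3
    have h2 : ∀ k, k ≤ n → Function.Bijective (φ.app (pow E k)) := by
      intro k hk
      obtain ⟨i, r, hir⟩ := pow_retract E hk
      exact bij_retract φ i r hir (bij_of_isIso _ h3)
    have hall := propagate E n F G hF hG hFp hGp φ h2
    haveI : ∀ X, IsIso (φ.app X) := by
      intro X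
      obtain ⟨k, ⟨e⟩⟩ := hgen X
      exact isIso_of_bij _ (bij_retract φ e.hom e.inv e.hom_inv_id (hall k))
    exact NatIso.isIso_of_isIso_app φ
  tfae_have 1 → 4 := by
    intro h1 k _ _
    have hb : ∀ Z : C, Function.Bijective (φ.app Z) := by
      intro Z
      haveI := h1
      exact bij_of_isIso _ inferInstance
    exact isIso_of_bij _ (crGrpMap_bij_of φ hb (k-1) _)
  tfae_have 4 → 1 := by
    intro h4
    have hall := mlemma E n F G hF hG hFp hGp φ
      (fun k h1 h2 => bij_of_isIso _ (h4 k h1 h2))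
    haveI : ∀ X, IsIso (φ.app X) := by
      intro X
      obtain ⟨k, ⟨e⟩⟩ := hgen X
      exact isIso_of_bij _ (bij_retract φ e.hom e.inv e.hom_inv_id (hall k))
    exact NatIso.isIso_of_isIso_app φ
  tfae_finish

end

end QF
end

section
/- For every reduced functor F : C → Ab and every X in C, the linearization of F is given by T₁F(X) = F(X)/{ F(∇²)(x) − F(r₁)(x) − F(r₂)(x) | x ∈ F(X ∨ X) }, i.e. T₁F(X) is the cokernel of the map F(X∨X) → F(X) given by (1,1)_* − (1,0)_* − (0,1)_*. -/
open CategoryTheory Limits ZeroObject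
open scoped TensorProduct

set_option linter.unusedSectionVars false

universe w v u

namespace QF

variable {C : Type u} [Category.{v} C] [HasZeroObject C] [HasZeroMorphisms C]
  [HasBinaryCoproducts C]

noncomputable section

lemma map_zero_of_reduced_s7 {F : C ⥤ AddCommGrpCat.{w}} (hF : Reduced F) {A B : C}
    (a : F.obj A) : F.map (0 : A ⟶ B) a = 0 := by
  rw [show (0 : A ⟶ B) = (0 : A ⟶ 0) ≫ (0 : (0 : C) ⟶ B) by simp]
  rw [fmap_comp_apply]
  haveI : Subsingleton (F.obj (0 : C)) := hF
  rw [show F.map (0 : A ⟶ 0) a = 0 from Subsingleton.elim _ _, map_zero]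


theorem statement10 (F : C ⥤ AddCommGrpCat.{w}) (hF : Reduced F) (X : C) :
    imSk F 1 X = AddMonoidHom.range
      ((show (F.obj (X ⨿ X) : Type w) →+ F.obj X from AddCommGrpCat.Hom.hom <| F.map (fold X)) -
       (show (F.obj (X ⨿ X) : Type w) →+ F.obj X from AddCommGrpCat.Hom.hom <| F.map (r1 X X)) -
       (show (F.obj (X ⨿ X) : Type w) →+ F.obj X from AddCommGrpCat.Hom.hom <| F.map (r2 X X))) := by
  have hfold : foldNest X 0 X (𝟙 X) = fold X := rfl
  apply AddSubgroup.ext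
  intro y
  constructor
  · rintro ⟨⟨z, hz⟩, rfl⟩
    refine ⟨z, ?_⟩
    have h1 : F.map (r1 X X) z = 0 := hz.1
    have h2 : F.map (r2 X X) z = 0 := hz.2
    show F.map (fold X) z - F.map (r1 X X) z - F.map (r2 X X) z = _
    rw [h1, h2, sub_zero, sub_zero]
    rfl
  · rintro ⟨x, rfl⟩
    set z : F.obj (X ⨿ X) :=
      x - F.map (r1 X X ≫ coprod.inl) x - F.map (r2 X X ≫ coprod.inr) x with hzdef
    have hmem : z ∈ cr2sub F X X := by
      constructor
      · show F.map (r1 X X) z = 0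
        rw [hzdef, map_sub, map_sub, ← fmap_comp_apply, ← fmap_comp_apply]
        rw [show (r1 X X ≫ coprod.inl) ≫ r1 X X = r1 X X by
          dsimp only [r1]; apply coprod.hom_ext <;> simp only [Category.assoc, coprod.inl_desc, coprod.inr_desc, Category.comp_id, Category.id_comp, zero_comp, comp_zero]]
        rw [show (r2 X X ≫ coprod.inr) ≫ r1 X X = 0 by
          dsimp only [r1, r2]; apply coprod.hom_ext <;> simp only [Category.assoc, coprod.inl_desc, coprod.inr_desc, Category.comp_id, Category.id_comp, zero_comp, comp_zero]]
        rw [map_zero_of_reduced_s7 hF]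
        abel
      · show F.map (r2 X X) z = 0
        rw [hzdef, map_sub, map_sub, ← fmap_comp_apply, ← fmap_comp_apply]
        rw [show (r1 X X ≫ coprod.inl) ≫ r2 X X = 0 by
          dsimp only [r1, r2]; apply coprod.hom_ext <;> simp only [Category.assoc, coprod.inl_desc, coprod.inr_desc, Category.comp_id, Category.id_comp, zero_comp, comp_zero]]
        rw [show (r2 X X ≫ coprod.inr) ≫ r2 X X = r2 X X by
          dsimp only [r2]; apply coprod.hom_ext <;> simp only [Category.assoc, coprod.inl_desc, coprod.inr_desc, Category.comp_id, Category.id_comp, zero_comp, comp_zero]]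
        rw [map_zero_of_reduced_s7 hF]
        abel
    refine ⟨⟨z, hmem⟩, ?_⟩
    show F.map (fold X) z = _
    have e1 : F.map (fold X) (F.map (r1 X X ≫ coprod.inl) x) = F.map (r1 X X) x := by
      rw [← fmap_comp_apply]
      congr 1
      congr 2
      dsimp only [fold, r1]; apply coprod.hom_ext <;> simp only [Category.assoc, coprod.inl_desc, coprod.inr_desc, Category.comp_id, Category.id_comp, zero_comp, comp_zero]
    have e2 : F.map (fold X) (F.map (r2 X X ≫ coprod.inr) x) = F.map (r2 X X) x := by
      rw [← fmap_comp_apply]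
      congr 1
      congr 2
      dsimp only [fold, r2]; apply coprod.hom_ext <;> simp only [Category.assoc, coprod.inl_desc, coprod.inr_desc, Category.comp_id, Category.id_comp, zero_comp, comp_zero]
    rw [hzdef, map_sub, map_sub]
    erw [e1, e2]
    rfl

end

end QF
end
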